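/- Let n be a positive natural number, let 𝓗 = 𝓗₁ ⊕ … ⊕ 𝓗ₙ be a Hilbert space direct sum of complex Hilbert spaces, let P be a positive bounded operator on 𝓗, and for each i let P_{ii} = ιᵢ* P ιᵢ be the compression of P to 𝓗ᵢ. Then ‖P‖ ≤ ∑_{i=1}^n ‖P_{ii}‖. -/

import Mathlib

set_option synthInstance.maxHeartbeats 400000
set_option maxHeartbeats 800000

open scoped InnerProductSpace ComplexOrder

lemma csP {E : Type*} [NormedAddCommGroup E] [InnerProductSpace ℂ E]
    (P : E →L[ℂ] E)
    (hPsa : ∀ x y : E, ⟪P x, y⟫_ℂ = ⟪x, P y⟫_ℂ)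
    (hPpos : ∀ x : E, 0 ≤ ⟪P x, x⟫_ℂ) (x y : E) :
    ‖⟪P x, y⟫_ℂ‖ * ‖⟪P y, x⟫_ℂ‖ ≤ (⟪P x, x⟫_ℂ).re * (⟪P y, y⟫_ℂ).re := by
  letI c : PreInnerProductSpace.Core ℂ E :=
  { inner := fun a b => ⟪P a, b⟫_ℂ
    conj_inner_symm := fun a b => by
      show (starRingEnd ℂ) ⟪P b, a⟫_ℂ = ⟪P a, b⟫_ℂ
      rw [hPsa b a, inner_conj_symm]
    re_inner_nonneg := fun a => by
      have h := hPpos a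
      rw [Complex.le_def] at h
      simpa using h.1
    add_left := fun a b z => by
      show ⟪P (a + b), z⟫_ℂ = ⟪P a, z⟫_ℂ + ⟪P b, z⟫_ℂ
      rw [map_add, inner_add_left]
    smul_left := fun a b r => by
      show ⟪P (r • a), b⟫_ℂ = (starRingEnd ℂ) r * ⟪P a, b⟫_ℂ
      rw [map_smul, inner_smul_left] }
  have := @InnerProductSpace.Core.inner_mul_inner_self_le ℂ E _ _ _ c x y
  exact this

lemma csP' {E : Type*} [NormedAddCommGroup E] [InnerProductSpace ℂ E]
    (P : E →L[ℂ] E)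
    (hPsa : ∀ x y : E, ⟪P x, y⟫_ℂ = ⟪x, P y⟫_ℂ)
    (hPpos : ∀ x : E, 0 ≤ ⟪P x, x⟫_ℂ) (x y : E) :
    ‖⟪P x, y⟫_ℂ‖ ≤
      Real.sqrt (⟪P x, x⟫_ℂ).re * Real.sqrt (⟪P y, y⟫_ℂ).re := by
  have key := csP P hPsa hPpos x y
  have hsym : ‖⟪P y, x⟫_ℂ‖ = ‖⟪P x, y⟫_ℂ‖ := by
    rw [hPsa y x, ← inner_conj_symm]
    exact Complex.norm_conj _
  rw [hsym] at key
  have h1 : 0 ≤ (⟪P x, x⟫_ℂ).re := by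
    have := hPpos x; rw [Complex.le_def] at this; simpa using this.1
  have h2 : 0 ≤ (⟪P y, y⟫_ℂ).re := by
    have := hPpos y; rw [Complex.le_def] at this; simpa using this.1
  calc ‖⟪P x, y⟫_ℂ‖ = Real.sqrt (‖⟪P x, y⟫_ℂ‖ * ‖⟪P x, y⟫_ℂ‖) :=
        (Real.sqrt_mul_self (norm_nonneg _)).symm
    _ ≤ Real.sqrt ((⟪P x, x⟫_ℂ).re * (⟪P y, y⟫_ℂ).re) := Real.sqrt_le_sqrt key
    _ = Real.sqrt (⟪P x, x⟫_ℂ).re * Real.sqrt (⟪P y, y⟫_ℂ).re := Real.sqrt_mul h1 _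

lemma normP_le {E : Type*} [NormedAddCommGroup E] [InnerProductSpace ℂ E]
    (P : E →L[ℂ] E)
    (hPsa : ∀ x y : E, ⟪P x, y⟫_ℂ = ⟪x, P y⟫_ℂ)
    (hPpos : ∀ x : E, 0 ≤ ⟪P x, x⟫_ℂ) {C : ℝ} (hC : 0 ≤ C)
    (h : ∀ z : E, (⟪P z, z⟫_ℂ).re ≤ C * ‖z‖ ^ 2) : ‖P‖ ≤ C := by
  refine P.opNorm_le_bound hC fun x => ?_
  rcases eq_or_lt_of_le (norm_nonneg (P x)) with h0 | h0
  · rw [← h0]; positivity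
  have key := csP P hPsa hPpos x (P x)
  have e1 : ⟪P (P x), x⟫_ℂ = ⟪P x, P x⟫_ℂ := hPsa (P x) x
  have e2 : ⟪P x, P x⟫_ℂ = (‖P x‖ : ℂ) ^ 2 := inner_self_eq_norm_sq_to_K (P x)
  rw [e1, e2] at key
  have e3 : ‖((‖P x‖ : ℂ)) ^ 2‖ = ‖P x‖ ^ 2 := by
    rw [norm_pow, Complex.norm_real, Real.norm_of_nonneg (norm_nonneg _)]
  rw [e3] at key
  have h1 := h x
  have h2 := h (P x)
  have hre1 : 0 ≤ (⟪P x, x⟫_ℂ).re := by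
    have := hPpos x; rw [Complex.le_def] at this; simpa using this.1
  have hre2 : 0 ≤ (⟪P (P x), P x⟫_ℂ).re := by
    have := hPpos (P x); rw [Complex.le_def] at this; simpa using this.1
  have h4 : ‖P x‖ ^ 2 * ‖P x‖ ^ 2 ≤ (C * ‖x‖ ^ 2) * (C * ‖P x‖ ^ 2) :=
    key.trans (mul_le_mul h1 h2 hre2 (by positivity))
  have h5 : ‖P x‖ ^ 2 ≤ (C * ‖x‖) ^ 2 := by nlinarith [pow_pos h0 2]
  have h6 : 0 ≤ C * ‖x‖ := mul_nonneg hC (norm_nonneg x)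
  nlinarith [h5, h6, norm_nonneg (P x)]


/-- **Corollary 1.2.** If `𝓗 = 𝓗₁ ⊕ … ⊕ 𝓗ₙ`, `P` is a positive bounded operator on `𝓗`,
and `P_{ii} = ιᵢ* P ιᵢ` is the compression of `P` to `𝓗ᵢ`, then `‖P‖ ≤ ∑ᵢ ‖P_{ii}‖`. -/
theorem stmt_1 (n : ℕ) (hn : 0 < n) (𝓗 : Fin n → Type*)
    [∀ i, NormedAddCommGroup (𝓗 i)] [∀ i, InnerProductSpace ℂ (𝓗 i)]
    [∀ i, CompleteSpace (𝓗 i)]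
    (P : PiLp 2 𝓗 →L[ℂ] PiLp 2 𝓗)
    (hPsa : ∀ x y : PiLp 2 𝓗, ⟪P x, y⟫_ℂ = ⟪x, P y⟫_ℂ)
    (hPpos : ∀ x : PiLp 2 𝓗, 0 ≤ ⟪P x, x⟫_ℂ)
    (Pii : ∀ i, 𝓗 i →L[ℂ] 𝓗 i)
    (hPii : ∀ i (x y : 𝓗 i), ⟪(Pii i) x, y⟫_ℂ =
      ⟪P ((WithLp.equiv 2 (∀ j, 𝓗 j)).symm (Pi.single i x)),
        (WithLp.equiv 2 (∀ j, 𝓗 j)).symm (Pi.single i y)⟫_ℂ) :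
    ‖P‖ ≤ ∑ i, ‖Pii i‖ := by
  set C : ℝ := ∑ i, ‖Pii i‖ with hCdef
  have hC : 0 ≤ C := Finset.sum_nonneg fun i _ => norm_nonneg _
  refine normP_le P hPsa hPpos hC fun x => ?_
  -- the embeddings
  set e : ∀ i, 𝓗 i → PiLp 2 𝓗 :=
    fun i v => (WithLp.equiv 2 (∀ j, 𝓗 j)).symm (Pi.single i v) with he
  -- decomposition of x
  have hx : x = ∑ i, e i (x i) := by
    apply (WithLp.linearEquiv 2 ℂ (∀ j, 𝓗 j)).injective
    rw [map_sum]
    funext j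
    rw [Finset.sum_apply]
    exact (Fintype.sum_pi_single j (fun i => x i)).symm
  -- the numbers a i
  set a : Fin n → ℝ := fun i => Real.sqrt ((⟪P (e i (x i)), e i (x i)⟫_ℂ).re) with ha
  have ha_nonneg : ∀ i, 0 ≤ a i := fun i => Real.sqrt_nonneg _
  -- expansion of the quadratic form
  have hexp : ⟪P x, x⟫_ℂ = ∑ i, ∑ j, ⟪P (e i (x i)), e j (x j)⟫_ℂ := by
    conv_lhs => rw [hx]
    rw [map_sum, sum_inner]
    exact Finset.sum_congr rfl fun i _ => inner_sum _ _ _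
  -- bound each term
  have hterm : ∀ i j, (⟪P (e i (x i)), e j (x j)⟫_ℂ).re ≤ a i * a j := by
    intro i j
    calc (⟪P (e i (x i)), e j (x j)⟫_ℂ).re ≤ ‖⟪P (e i (x i)), e j (x j)⟫_ℂ‖ :=
          Complex.re_le_norm _
      _ ≤ a i * a j := csP' P hPsa hPpos _ _
  -- step 1 : re ⟪P x, x⟫ ≤ (∑ a)²
  have step1 : (⟪P x, x⟫_ℂ).re ≤ (∑ i, a i) ^ 2 := by
    rw [hexp, Complex.re_sum]
    calc ∑ i, (∑ j, ⟪P (e i (x i)), e j (x j)⟫_ℂ).re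
        = ∑ i, ∑ j, (⟪P (e i (x i)), e j (x j)⟫_ℂ).re := by
          exact Finset.sum_congr rfl fun i _ => Complex.re_sum _ _
      _ ≤ ∑ i, ∑ j, a i * a j :=
          Finset.sum_le_sum fun i _ => Finset.sum_le_sum fun j _ => hterm i j
      _ = (∑ i, a i) ^ 2 := by rw [sq, Finset.sum_mul_sum]
  -- a i bound : a i ≤ √‖Pii i‖ * ‖x i‖
  have habound : ∀ i, a i ≤ Real.sqrt ‖Pii i‖ * ‖x i‖ := by
    intro i
    have h1 : (⟪P (e i (x i)), e i (x i)⟫_ℂ).re = (⟪(Pii i) (x i), x i⟫_ℂ).re := by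
      rw [hPii i (x i) (x i)]
    have h2 : (⟪(Pii i) (x i), x i⟫_ℂ).re ≤ ‖Pii i‖ * ‖x i‖ ^ 2 := by
      calc (⟪(Pii i) (x i), x i⟫_ℂ).re ≤ ‖⟪(Pii i) (x i), x i⟫_ℂ‖ := Complex.re_le_norm _
        _ ≤ ‖(Pii i) (x i)‖ * ‖x i‖ := norm_inner_le_norm _ _
        _ ≤ (‖Pii i‖ * ‖x i‖) * ‖x i‖ :=
            mul_le_mul_of_nonneg_right ((Pii i).le_opNorm _) (norm_nonneg _)
        _ = ‖Pii i‖ * ‖x i‖ ^ 2 := by ring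
    rw [ha]
    calc Real.sqrt ((⟪P (e i (x i)), e i (x i)⟫_ℂ).re)
        ≤ Real.sqrt (‖Pii i‖ * ‖x i‖ ^ 2) := Real.sqrt_le_sqrt (by rw [h1]; exact h2)
      _ = Real.sqrt ‖Pii i‖ * ‖x i‖ := by
          rw [Real.sqrt_mul (norm_nonneg _), Real.sqrt_sq (norm_nonneg _)]
  -- step 2 : (∑ a)² ≤ C * ‖x‖²
  have hsum_le : ∑ i, a i ≤ ∑ i, Real.sqrt ‖Pii i‖ * ‖x i‖ :=
    Finset.sum_le_sum fun i _ => habound i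
  have hCS : (∑ i, Real.sqrt ‖Pii i‖ * ‖x i‖) ^ 2 ≤
      (∑ i, (Real.sqrt ‖Pii i‖) ^ 2) * ∑ i, ‖x i‖ ^ 2 :=
    Finset.sum_mul_sq_le_sq_mul_sq _ _ _
  have hsqrt : ∀ i : Fin n, (Real.sqrt ‖Pii i‖) ^ 2 = ‖Pii i‖ := fun i =>
    Real.sq_sqrt (norm_nonneg _)
  have hnormx : ∑ i, ‖x i‖ ^ 2 = ‖x‖ ^ 2 := (PiLp.norm_sq_eq_of_L2 𝓗 x).symm
  calc (⟪P x, x⟫_ℂ).re ≤ (∑ i, a i) ^ 2 := step1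
    _ ≤ (∑ i, Real.sqrt ‖Pii i‖ * ‖x i‖) ^ 2 := by
        apply pow_le_pow_left₀ (Finset.sum_nonneg fun i _ => ha_nonneg i) hsum_le
    _ ≤ (∑ i, (Real.sqrt ‖Pii i‖) ^ 2) * ∑ i, ‖x i‖ ^ 2 := hCS
    _ = C * ‖x‖ ^ 2 := by
        rw [hnormx]
        congr 1
        exact Finset.sum_congr rfl fun i _ => hsqrt i
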